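/- For λ ≠ −1/α with |λα| < 1 and α > 0, the second moment of the degenerate zero-truncated Poisson random variable satisfies E[X_λ²] = ((1+α)/(1+αλ)) E[X_λ] = (α(1+α)/(1+αλ)²) · e_λ(α)/(e_λ(α)−1). -/

import Mathlib

open Real Filter Finset

/-- λ-falling factorial (x)_{n,λ} = x(x-λ)⋯(x-(n-1)λ). -/
noncomputable def dfall (lam x : ℝ) (n : ℕ) : ℝ := ∏ j ∈ Finset.range n, (x - j * lam)

/-- degenerate exponential e_λ(t) = (1+λt)^{1/λ}. -/
noncomputable def dexp (lam t : ℝ) : ℝ := (1 + lam * t) ^ (1 / lam)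

/-- PMF of the degenerate zero-truncated Poisson random variable (for n ≥ 1). -/
noncomputable def ztP (lam a : ℝ) (n : ℕ) : ℝ :=
  1 / (dexp lam a - 1) * (a ^ n / (Nat.factorial n : ℝ)) * dfall lam 1 n

noncomputable def bc (r : ℝ) (n : ℕ) : ℝ := (∏ j ∈ Finset.range n, (r - j)) / n.factorial

lemma bc_succ (r : ℝ) (n : ℕ) : bc r (n + 1) * (n + 1) = (r - n) * bc r n := by
  have h1 : ((n.factorial : ℝ)) ≠ 0 := Nat.cast_ne_zero.2 n.factorial_ne_zero
  have h2 : ((n : ℝ) + 1) ≠ 0 := by positivity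
  simp only [bc, Finset.prod_range_succ, Nat.factorial_succ, Nat.cast_mul, Nat.cast_add,
    Nat.cast_one]
  field_simp

lemma abs_bc_succ (r : ℝ) (n : ℕ) : |bc r (n + 1)| = |r - n| / (n + 1) * |bc r n| := by
  have h2 : (0:ℝ) < (n : ℝ) + 1 := by positivity
  have := bc_succ r n
  have hb : bc r (n + 1) = (r - n) * bc r n / ((n:ℝ) + 1) := by
    field_simp at this ⊢; linarith [this]
  rw [hb, abs_div, abs_mul, abs_of_pos h2]
  ring

lemma summable_aux (r : ℝ) {ρ : ℝ} (h0 : 0 ≤ ρ) (h1 : ρ < 1) :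
    Summable (fun n : ℕ => ((n : ℝ) + 1) * |bc r n| * ρ ^ n) := by
  obtain ⟨l, hlρ, hl1⟩ : ∃ l, ρ < l ∧ l < 1 := ⟨(1 + ρ) / 2, by linarith, by linarith⟩
  have hε : 0 < l - ρ := by linarith
  apply summable_of_ratio_norm_eventually_le hl1
  obtain ⟨N, hN⟩ := exists_nat_ge ((ρ * (2 + |r|) + 2 * ρ * |r| + 1) / (l - ρ))
  filter_upwards [eventually_ge_atTop N] with n hn
  have hn' : ((ρ * (2 + |r|) + 2 * ρ * |r| + 1) / (l - ρ)) ≤ (n : ℝ) :=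
    le_trans hN (Nat.cast_le.2 hn)
  have key : ρ * (2 + |r|) + 2 * ρ * |r| + 1 ≤ (l - ρ) * n := by
    rw [div_le_iff₀ hε] at hn'; linarith [hn']
  have hrn : |r - n| ≤ (n : ℝ) + |r| := by
    calc |r - n| ≤ |r| + |(n:ℝ)| := abs_sub r _
    _ = (n:ℝ) + |r| := by rw [Nat.abs_cast]; ring
  have hbn : (0:ℝ) ≤ |bc r n| * ρ ^ n := by positivity
  have hn0 : (0:ℝ) ≤ (n:ℝ) := Nat.cast_nonneg n
  have hr0 : (0:ℝ) ≤ |r| := abs_nonneg r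
  have poly : ((n:ℝ) + 2) * ((n:ℝ) + |r|) * ρ ≤ l * ((n:ℝ) + 1) ^ 2 := by
    nlinarith [mul_le_mul_of_nonneg_right key hn0, mul_nonneg h0 hr0, mul_nonneg hn0 hr0]
  have pos1 : (0:ℝ) ≤ ((n:ℝ) + 1 + 1) * |bc r (n+1)| * ρ^(n+1) := by positivity
  have pos2 : (0:ℝ) ≤ ((n:ℝ) + 1) * |bc r n| * ρ^n := by positivity
  have h2 : ((n:ℝ) + 2) * (|r - (n:ℝ)| / ((n:ℝ) + 1)) * ρ ≤ l * ((n:ℝ) + 1) := by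
    have hrw : ((n:ℝ) + 2) * (|r - (n:ℝ)| / ((n:ℝ) + 1)) * ρ
        = ((n:ℝ) + 2) * |r - (n:ℝ)| * ρ / ((n:ℝ) + 1) := by ring
    rw [hrw, div_le_iff₀ (by positivity : (0:ℝ) < (n:ℝ)+1)]
    calc ((n:ℝ) + 2) * |r - (n:ℝ)| * ρ ≤ ((n:ℝ) + 2) * ((n:ℝ) + |r|) * ρ := by
          apply mul_le_mul_of_nonneg_right _ h0
          exact mul_le_mul_of_nonneg_left hrn (by linarith)
      _ ≤ l * ((n:ℝ) + 1) ^ 2 := poly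
      _ = l * ((n:ℝ) + 1) * ((n:ℝ) + 1) := by ring
  have goal0 : ((n:ℝ) + 1 + 1) * |bc r (n+1)| * ρ^(n+1)
      ≤ l * (((n:ℝ) + 1) * |bc r n| * ρ ^ n) := by
    calc ((n:ℝ) + 1 + 1) * |bc r (n+1)| * ρ^(n+1)
        = ((n:ℝ) + 2) * (|r - (n:ℝ)| / ((n:ℝ) + 1)) * ρ * (|bc r n| * ρ ^ n) := by
          rw [abs_bc_succ]; ring
      _ ≤ l * ((n:ℝ) + 1) * (|bc r n| * ρ ^ n) := mul_le_mul_of_nonneg_right h2 hbn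
      _ = l * (((n:ℝ) + 1) * |bc r n| * ρ ^ n) := by ring
  rw [Real.norm_eq_abs, Real.norm_eq_abs, abs_of_nonneg pos2]
  push_cast
  rw [abs_of_nonneg (by push_cast at pos1 ⊢; linarith [pos1] : (0:ℝ) ≤ ((n:ℝ)+1+1) * |bc r (n+1)| * ρ^(n+1))]
  exact goal0

lemma summable_bc (r : ℝ) {x : ℝ} (hx : |x| < 1) : Summable (fun n : ℕ => bc r n * x ^ n) := by
  apply Summable.of_norm
  apply Summable.of_nonneg_of_le (fun n => norm_nonneg _) _ (summable_aux r (abs_nonneg x) hx)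
  intro n
  rw [Real.norm_eq_abs, abs_mul, abs_pow]
  have h1 : (1:ℝ) ≤ (n:ℝ) + 1 := by linarith [Nat.cast_nonneg (α := ℝ) n]
  nlinarith [abs_nonneg (bc r n), pow_nonneg (abs_nonneg x) n,
    mul_nonneg (abs_nonneg (bc r n)) (pow_nonneg (abs_nonneg x) n)]

lemma summable_deriv_bound (r : ℝ) {ρ : ℝ} (h0 : 0 ≤ ρ) (h1 : ρ < 1) :
    Summable (fun n : ℕ => (n : ℝ) * |bc r n| * ρ ^ (n - 1)) := by
  rw [← summable_nat_add_iff 1]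
  apply Summable.of_nonneg_of_le _ _ ((summable_aux r h0 h1).mul_left (|r| + 1))
  · intro n; positivity
  · intro n
    simp only [Nat.cast_add, Nat.cast_one, Nat.add_sub_cancel]
    rw [abs_bc_succ]
    have hne : ((n:ℝ) + 1) ≠ 0 := by positivity
    have e : ((n:ℝ)+1) * (|r - n| / ((n:ℝ)+1) * |bc r n|) * ρ^n
        = |r - (n:ℝ)| * |bc r n| * ρ^n := by field_simp
    rw [e]
    have hrn : |r - n| ≤ (|r| + 1) * ((n:ℝ)+1) := by
      have h2 : |r - n| ≤ |r| + (n:ℝ) := by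
        calc |r - n| ≤ |r| + |(n:ℝ)| := abs_sub r _
        _ = |r| + (n:ℝ) := by rw [Nat.abs_cast]
      nlinarith [abs_nonneg r, Nat.cast_nonneg (α := ℝ) n]
    calc |r - (n:ℝ)| * |bc r n| * ρ^n
        ≤ ((|r|+1) * ((n:ℝ)+1)) * |bc r n| * ρ^n := by
          apply mul_le_mul_of_nonneg_right _ (pow_nonneg h0 n)
          exact mul_le_mul_of_nonneg_right hrn (abs_nonneg _)
      _ = (|r|+1) * (((n:ℝ)+1) * |bc r n| * ρ^n) := by ring

lemma summable_deriv_at (r : ℝ) {y : ℝ} (hy : |y| < 1) :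
    Summable (fun n : ℕ => bc r n * ((n : ℝ) * y ^ (n - 1))) := by
  apply Summable.of_norm
  apply Summable.of_nonneg_of_le (fun n => norm_nonneg _) _
    (summable_deriv_bound r (abs_nonneg y) hy)
  intro n
  rw [Real.norm_eq_abs, abs_mul, abs_mul, abs_pow, Nat.abs_cast]
  have : |bc r n| * ((n:ℝ) * |y| ^ (n-1)) = (n:ℝ) * |bc r n| * |y| ^ (n-1) := by ring
  rw [this]

lemma hasSum_binomial (r : ℝ) {x : ℝ} (hx : |x| < 1) :
    HasSum (fun n : ℕ => bc r n * x ^ n) ((1 + x) ^ r) := by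
  obtain ⟨ρ, habs, hρ0, hρ1⟩ : ∃ ρ, |x| < ρ ∧ 0 < ρ ∧ ρ < 1 :=
    ⟨(1 + |x|) / 2, by linarith, by linarith [abs_nonneg x], by linarith⟩
  set t : Set ℝ := Metric.ball 0 ρ with htdef
  have ht : IsOpen t := Metric.isOpen_ball
  have htc : IsPreconnected t := (convex_ball _ _).isPreconnected
  have hmem : ∀ {y : ℝ}, y ∈ t ↔ |y| < ρ := by
    intro y; simp [htdef, Metric.mem_ball, Real.dist_eq]
  have h0t : (0:ℝ) ∈ t := hmem.2 (by simpa using hρ0)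
  have hxt : x ∈ t := hmem.2 habs
  set F : ℝ → ℝ := fun y => ∑' n : ℕ, bc r n * y ^ n with hF
  set F' : ℝ → ℝ := fun y => ∑' n : ℕ, bc r n * ((n:ℝ) * y ^ (n - 1)) with hF'
  have hderiv : ∀ y ∈ t, HasDerivAt F (F' y) y := by
    intro y hy
    apply hasDerivAt_tsum_of_isPreconnected (summable_deriv_bound r hρ0.le hρ1) ht htc
      (fun n z _ => by simpa using ((hasDerivAt_pow n z).const_mul (bc r n)))
      _ h0t _ hy
    · intro n z hz
      rw [Real.norm_eq_abs, abs_mul, abs_mul, abs_pow, Nat.abs_cast]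
      have hzρ : |z| ≤ ρ := le_of_lt (hmem.1 hz)
      have : |bc r n| * ((n:ℝ) * |z| ^ (n-1)) ≤ |bc r n| * ((n:ℝ) * ρ ^ (n-1)) := by
        apply mul_le_mul_of_nonneg_left _ (abs_nonneg _)
        exact mul_le_mul_of_nonneg_left (pow_le_pow_left₀ (abs_nonneg z) hzρ _) (Nat.cast_nonneg n)
      linarith [this]
    · exact summable_bc r (x := 0) (by norm_num)
  -- ODE identity
  have hode : ∀ y ∈ t, (1 + y) * F' y = r * F y := by
    intro y hy
    have hy1 : |y| < 1 := lt_trans (hmem.1 hy) hρ1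
    have sfull : Summable (fun n : ℕ => bc r n * ((n:ℝ) * y ^ (n - 1))) :=
      summable_deriv_at r hy1
    have s1 : Summable (fun n : ℕ => bc r (n+1) * (((n:ℕ)+1 : ℝ) * y ^ n)) := by
      have := (summable_nat_add_iff 1).2 sfull
      simpa using this
    have s2 : Summable (fun n : ℕ => (n:ℝ) * (bc r n * y ^ n)) := by
      apply Summable.of_norm
      apply Summable.of_nonneg_of_le (fun n => norm_nonneg _) _
        (summable_aux r (abs_nonneg y) hy1)
      intro n
      rw [Real.norm_eq_abs, abs_mul, abs_mul, abs_pow, Nat.abs_cast]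
      nlinarith [abs_nonneg (bc r n), pow_nonneg (abs_nonneg y) n,
        mul_nonneg (abs_nonneg (bc r n)) (pow_nonneg (abs_nonneg y) n),
        Nat.cast_nonneg (α := ℝ) n]
    have eF' : F' y = ∑' n : ℕ, bc r (n+1) * (((n:ℕ)+1 : ℝ) * y ^ n) := by
      have h0 : F' y = ∑' n : ℕ, bc r n * ((n:ℝ) * y ^ (n - 1)) := rfl
      rw [h0, Summable.tsum_eq_zero_add sfull]
      simp
    have eyF' : y * F' y = ∑' n : ℕ, (n:ℝ) * (bc r n * y ^ n) := by
      have h0 : F' y = ∑' n : ℕ, bc r n * ((n:ℝ) * y ^ (n - 1)) := rfl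
      rw [h0, ← tsum_mul_left]
      congr 1
      funext n
      cases n with
      | zero => simp
      | succ m =>
        simp only [Nat.add_sub_cancel]
        push_cast
        ring
    have comb : F' y + y * F' y = r * F y := by
      rw [eyF', eF', ← Summable.tsum_add s1 s2]
      have hFy : F y = ∑' n : ℕ, bc r n * y ^ n := rfl
      rw [hFy, ← tsum_mul_left]
      congr 1
      funext n
      have hb := bc_succ r n
      have : bc r (n+1) * (((n:ℕ)+1:ℝ) * y ^ n) = (r - n) * bc r n * y ^ n := by
        rw [← mul_assoc, hb]
      rw [this]
      ring
    linarith [comb]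
  -- G is constant
  set G : ℝ → ℝ := fun y => F y * (1 + y) ^ (-r) with hG
  have hGderiv : ∀ y ∈ t, HasDerivAt G 0 y := by
    intro y hy
    have hy1 : |y| < 1 := lt_trans (hmem.1 hy) hρ1
    have hpos : 0 < 1 + y := by cases abs_lt.1 hy1; linarith
    have hP : HasDerivAt (fun z : ℝ => (1 + z) ^ (-r)) (-r * (1 + y) ^ (-r - 1)) y := by
      have h1 : HasDerivAt (fun z : ℝ => 1 + z) 1 y := by
        simpa using (hasDerivAt_id y).const_add (1:ℝ)
      have h2 : HasDerivAt (fun w : ℝ => w ^ (-r)) (-r * (1 + y) ^ (-r - 1)) (1 + y) :=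
        Real.hasDerivAt_rpow_const (Or.inl hpos.ne')
      have h3 := h2.comp y h1
      rw [mul_one] at h3
      exact h3
    have hmul := (hderiv y hy).mul hP
    have hpow : (1 + y) ^ (-r) = (1 + y) ^ (-r - 1) * (1 + y) := by
      simpa using Real.rpow_add_one hpos.ne' (-r - 1)
    have e : F' y * (1 + y) ^ (-r) + F y * (-r * (1 + y) ^ (-r - 1))
        = ((1 + y) * F' y - r * F y) * (1 + y) ^ (-r - 1) := by
      rw [hpow]; ring
    rw [hode y hy, sub_self, zero_mul] at e
    exact e ▸ hmul
  have hsub : ∀ z : ℝ, |z| ≤ |x| → z ∈ t := fun z h => hmem.2 (lt_of_le_of_lt h habs)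
  have hGconst : G x = G 0 := by
    rcases le_total 0 x with hx0 | hx0
    · have := constant_of_has_deriv_right_zero (f := G) (a := 0) (b := x)
        (fun z hz => (hGderiv z (hsub z (abs_le.2 ⟨by linarith [abs_nonneg x, hz.1],
          le_trans hz.2 (le_abs_self x)⟩))).continuousAt.continuousWithinAt)
        (fun z hz => (hGderiv z (hsub z (abs_le.2 ⟨by linarith [abs_nonneg x, hz.1],
          le_trans (le_of_lt hz.2) (le_abs_self x)⟩))).hasDerivWithinAt)
      exact this x ⟨hx0, le_refl x⟩
    · have := constant_of_has_deriv_right_zero (f := G) (a := x) (b := 0)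
        (fun z hz => (hGderiv z (hsub z (abs_le.2 ⟨le_trans (neg_abs_le x) hz.1,
          le_trans hz.2 (abs_nonneg x)⟩))).continuousAt.continuousWithinAt)
        (fun z hz => (hGderiv z (hsub z (abs_le.2 ⟨le_trans (neg_abs_le x) hz.1,
          le_trans (le_of_lt hz.2) (abs_nonneg x)⟩))).hasDerivWithinAt)
      exact (this 0 ⟨hx0, le_refl 0⟩).symm
  have hF0 : F 0 = 1 := by
    have h0 : F 0 = ∑' n : ℕ, bc r n * (0:ℝ) ^ n := rfl
    rw [h0, tsum_eq_single 0 (fun n hn => by simp [zero_pow hn])]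
    simp [bc]
  have hG0 : G 0 = 1 := by rw [hG]; simp [hF0]
  have hpos : 0 < 1 + x := by cases abs_lt.1 hx; linarith
  have hFx : F x = (1 + x) ^ r := by
    have h1 : F x * (1 + x) ^ (-r) = 1 := by rw [← hGconst] at hG0; simpa [hG] using hG0
    have h2 : (0:ℝ) < (1 + x) ^ r := Real.rpow_pos_of_pos hpos r
    rw [Real.rpow_neg hpos.le] at h1
    field_simp at h1
    linarith [h1]
  exact (summable_bc r hx).hasSum_iff.2 hFx

lemma hasSum_dfall (lam a x : ℝ) (hlam : lam ≠ 0) (habs : |lam * a| < 1) :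
    HasSum (fun n : ℕ => a ^ n / (n.factorial : ℝ) * dfall lam x n)
      ((1 + lam * a) ^ (x / lam)) := by
  have h := hasSum_binomial (x / lam) habs
  have he : (fun n : ℕ => a ^ n / (n.factorial : ℝ) * dfall lam x n)
      = fun n => bc (x / lam) n * (lam * a) ^ n := by
    funext n
    have key : ∏ j ∈ Finset.range n, (x - (j:ℝ) * lam)
        = (∏ j ∈ Finset.range n, (x / lam - j)) * lam ^ n := by
      calc ∏ j ∈ Finset.range n, (x - (j:ℝ) * lam)
          = ∏ j ∈ Finset.range n, ((x / lam - j) * lam) := by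
            apply Finset.prod_congr rfl; intro j _; field_simp
        _ = (∏ j ∈ Finset.range n, (x / lam - (j:ℝ))) * ∏ _j ∈ Finset.range n, lam :=
            Finset.prod_mul_distrib
        _ = (∏ j ∈ Finset.range n, (x / lam - (j:ℝ))) * lam ^ n := by
            rw [Finset.prod_const, Finset.card_range]
    rw [dfall, bc, key, mul_pow]
    ring
  rw [he]
  exact h

lemma dfall_one_succ (lam : ℝ) (n : ℕ) : dfall lam 1 (n + 1) = dfall lam (1 - lam) n := by
  rw [dfall, dfall, Finset.prod_range_succ']
  simp only [Nat.cast_zero, zero_mul, sub_zero, mul_one]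
  apply Finset.prod_congr rfl
  intro j _
  push_cast
  ring

lemma dfall_sub_succ (lam : ℝ) (n : ℕ) :
    dfall lam (1 - lam) (n + 1) = (1 - lam) * dfall lam (1 - 2 * lam) n := by
  rw [dfall, dfall, Finset.prod_range_succ']
  simp only [Nat.cast_zero, zero_mul, sub_zero]
  rw [mul_comm]
  congr 1
  apply Finset.prod_congr rfl
  intro j _
  push_cast
  ring

theorem stmt3 (lam a : ℝ) (ha : 0 < a) (hne : lam ≠ -(1 / a)) (habs : |lam * a| < 1) :
    (∑' n : ℕ, ((n + 1 : ℕ) : ℝ) ^ 2 * ztP lam a (n + 1)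
        = (1 + a) / (1 + a * lam) * ∑' n : ℕ, ((n + 1 : ℕ) : ℝ) * ztP lam a (n + 1)) ∧
    (∑' n : ℕ, ((n + 1 : ℕ) : ℝ) ^ 2 * ztP lam a (n + 1)
        = a * (1 + a) / (1 + a * lam) ^ 2 * (dexp lam a / (dexp lam a - 1))) := by
  by_cases hlam : lam = 0
  · subst hlam
    have hz : ∀ n, ztP 0 a n = 0 := by
      intro n
      simp [ztP, dexp]
    simp only [hz, mul_zero, tsum_zero]
    constructor
    · simp
    · simp [dexp]
  · -- main case
    have hb : 0 < 1 + lam * a := by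
      rcases abs_lt.1 habs with ⟨h1, h2⟩; linarith
    have hbne : (1 + lam * a) ≠ 0 := ne_of_gt hb
    set E := dexp lam a with hE
    have hE1 : 1 < E := by
      rw [hE, dexp, Real.one_lt_rpow_iff_of_pos hb]
      rcases lt_or_gt_of_ne hlam with h | h
      · right
        constructor
        · nlinarith
        · exact one_div_neg.2 h
      · left
        exact ⟨by nlinarith, one_div_pos.2 h⟩
    have hEne : E - 1 ≠ 0 := sub_ne_zero.2 (ne_of_gt hE1)
    have key : ∀ x : ℝ, HasSum (fun n : ℕ => a ^ n / (n.factorial : ℝ) * dfall lam x n)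
        ((1 + lam * a) ^ (x / lam)) := fun x => hasSum_dfall lam a x hlam habs
    -- first moment term identity
    have t1 : ∀ n : ℕ, ((n + 1 : ℕ) : ℝ) * ztP lam a (n + 1)
        = (1 / (E - 1)) * a * (a ^ n / (n.factorial : ℝ) * dfall lam (1 - lam) n) := by
      intro n
      rw [ztP, dfall_one_succ, ← hE]
      have hfac : ((n + 1).factorial : ℝ) = ((n : ℝ) + 1) * (n.factorial : ℝ) := by
        rw [Nat.factorial_succ]; push_cast; ring
      have hfn : ((n.factorial : ℝ)) ≠ 0 := Nat.cast_ne_zero.2 n.factorial_ne_zero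
      have hn1 : ((n : ℝ) + 1) ≠ 0 := by positivity
      rw [hfac]
      push_cast
      field_simp
      ring
    set P1 : ℝ := (1 + lam * a) ^ ((1 - lam) / lam) with hP1
    set P2 : ℝ := (1 + lam * a) ^ ((1 - 2 * lam) / lam) with hP2
    -- first moment
    have h1 : HasSum (fun n : ℕ => ((n + 1 : ℕ) : ℝ) * ztP lam a (n + 1))
        (1 / (E - 1) * a * P1) := by
      have := (key (1 - lam)).mul_left (1 / (E - 1) * a)
      rw [← hP1] at this
      convert this using 1
      rfl
      funext n
      rw [t1 n]
    -- second moment split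
    have t2 : ∀ n : ℕ, ((n + 1 : ℕ) : ℝ) ^ 2 * ztP lam a (n + 1)
        = (1 / (E - 1) * a * (a ^ n / (n.factorial : ℝ) * dfall lam (1 - lam) n))
          + (n : ℝ) * (1 / (E - 1) * a * (a ^ n / (n.factorial : ℝ) * dfall lam (1 - lam) n)) := by
      intro n
      have : ((n + 1 : ℕ) : ℝ) ^ 2 * ztP lam a (n + 1)
          = ((n : ℝ) + 1) * (((n + 1 : ℕ) : ℝ) * ztP lam a (n + 1)) := by
        push_cast; ring
      rw [this, t1 n]
      ring
    have hf2 : HasSum (fun n : ℕ => (n : ℝ) *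
        (1 / (E - 1) * a * (a ^ n / (n.factorial : ℝ) * dfall lam (1 - lam) n)))
        (1 / (E - 1) * a ^ 2 * (1 - lam) * P2) := by
      have hs : HasSum (fun m : ℕ => ((m : ℕ) + 1 : ℝ) *
          (1 / (E - 1) * a * (a ^ (m + 1) / ((m + 1).factorial : ℝ) * dfall lam (1 - lam) (m + 1))))
          (1 / (E - 1) * a ^ 2 * (1 - lam) * P2) := by
        have := (key (1 - 2 * lam)).mul_left (1 / (E - 1) * a ^ 2 * (1 - lam))
        rw [← hP2] at this
        convert this using 1
        rfl
        funext m
        rw [dfall_sub_succ]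
        have hfac : ((m + 1).factorial : ℝ) = ((m : ℝ) + 1) * (m.factorial : ℝ) := by
          rw [Nat.factorial_succ]; push_cast; ring
        have hfn : ((m.factorial : ℝ)) ≠ 0 := Nat.cast_ne_zero.2 m.factorial_ne_zero
        have hn1 : ((m : ℝ) + 1) ≠ 0 := by positivity
        rw [hfac]
        field_simp
        ring
      have := (hasSum_nat_add_iff (f := fun n : ℕ => (n : ℝ) *
          (1 / (E - 1) * a * (a ^ n / (n.factorial : ℝ) * dfall lam (1 - lam) n))) 1).1
        (by push_cast; convert hs using 1)
      simpa using this
    have hf1 : HasSum (fun n : ℕ =>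
        1 / (E - 1) * a * (a ^ n / (n.factorial : ℝ) * dfall lam (1 - lam) n))
        (1 / (E - 1) * a * P1) := by
      have := (key (1 - lam)).mul_left (1 / (E - 1) * a)
      rw [← hP1] at this
      convert this using 1
    have h2 : HasSum (fun n : ℕ => ((n + 1 : ℕ) : ℝ) ^ 2 * ztP lam a (n + 1))
        (1 / (E - 1) * a * P1 + 1 / (E - 1) * a ^ 2 * (1 - lam) * P2) := by
      have hadd := hf1.add hf2
      convert hadd using 1
      funext n
      rw [t2 n]
    have eP1 : P1 = E / (1 + lam * a) := by
      have e : (1 - lam) / lam = 1 / lam - 1 := by field_simp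
      rw [hP1, e, Real.rpow_sub hb, Real.rpow_one, hE, dexp]
    have eP2 : P2 = E / (1 + lam * a) ^ 2 := by
      have e : (1 - 2 * lam) / lam = 1 / lam - 2 := by field_simp
      rw [hP2, e, Real.rpow_sub hb, hE, dexp,
        show ((2:ℝ)) = ((2:ℕ):ℝ) by norm_num, Real.rpow_natCast]
    have hbne' : (1 + a * lam) ≠ 0 := by rw [mul_comm a lam]; exact hbne
    rw [h1.tsum_eq, h2.tsum_eq, eP1, eP2]
    constructor
    · field_simp
      ring
    · field_simp
      ring
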